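/- (Rectangles inscribed in four lines form a conic section.) Let a₁, a₂, a₃, a₄, b₁, b₂, b₃, b₄ ∈ ℝ and let L_j = {(x, a_j·x + b_j) : x ∈ ℝ} ⊆ ℝ² be the corresponding non-vertical lines. For (x₁, x₂, x₃) ∈ ℝ³ set p_j = (x_j, a_j·x_j + b_j) for j = 1, 2, 3 and p₄ = p₁ + p₃ − p₂ (so p₁, p₂, p₃, p₄ is a parallelogram). Then the set Γ′ = {(x₁, x₂, x₃) ∈ ℝ³ : p₄ ∈ L₄ and ⟨p₁ − p₂, p₃ − p₂⟩ = 0}, which parametrizes the labeled (possibly degenerate) rectangles with j-th vertex on L_j, equals ℓ⁻¹(0) ∩ q⁻¹(0), where ℓ : ℝ³ → ℝ is the affine function ℓ(x₁, x₂, x₃) = (a₁ − a₄)x₁ − (a₂ − a₄)x₂ + (a₃ − a₄)x₃ + (b₁ − b₂ + b₃ − b₄) and q : ℝ³ → ℝ is a polynomial function of total degree at most 2. Moreover, if a₁, a₂, a₃, a₄ are not all equal, then ℓ is a nonconstant affine function, so ℓ⁻¹(0) is an affine plane in ℝ³. -/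
import Mathlib


noncomputable section

open MvPolynomial in
lemma aux_deg1 (a b c : ℝ) :
    ((C a * X 0 + C b * X 1 + C c : MvPolynomial (Fin 3) ℝ)).totalDegree ≤ 1 := by
  apply le_trans (totalDegree_add _ _)
  simp only [max_le_iff]
  constructor
  · apply le_trans (totalDegree_add _ _)
    simp only [max_le_iff]
    constructor
    · exact le_trans (totalDegree_mul _ _) (by simp [totalDegree_X])
    · exact le_trans (totalDegree_mul _ _) (by simp [totalDegree_X])
  · simp [totalDegree_C]

/-- Rectangles inscribed in four non-vertical lines `L_j = {(x, a_j x + b_j)}`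
form a conic section: the set `Γ′ ⊆ ℝ³` parametrizing labeled (possibly
degenerate) rectangles with `j`-th vertex on `L_j` equals
`ℓ⁻¹(0) ∩ q⁻¹(0)` where `ℓ` is the explicit affine function
`ℓ(x₁,x₂,x₃) = (a₁−a₄)x₁ − (a₂−a₄)x₂ + (a₃−a₄)x₃ + (b₁−b₂+b₃−b₄)` and `q` is a
polynomial of total degree at most `2`.  Moreover, if `a₁, a₂, a₃, a₄` are not
all equal, then `ℓ` is nonconstant. -/
theorem stmt12 (a₁ a₂ a₃ a₄ b₁ b₂ b₃ b₄ : ℝ)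
    (L₄ : Set (ℝ × ℝ)) (hL₄ : L₄ = {y : ℝ × ℝ | ∃ x : ℝ, y = (x, a₄ * x + b₄)})
    (p₁ p₂ p₃ p₄ : ℝ → ℝ → ℝ → ℝ × ℝ)
    (hp₁ : ∀ x₁ x₂ x₃ : ℝ, p₁ x₁ x₂ x₃ = (x₁, a₁ * x₁ + b₁))
    (hp₂ : ∀ x₁ x₂ x₃ : ℝ, p₂ x₁ x₂ x₃ = (x₂, a₂ * x₂ + b₂))
    (hp₃ : ∀ x₁ x₂ x₃ : ℝ, p₃ x₁ x₂ x₃ = (x₃, a₃ * x₃ + b₃))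
    (hp₄ : ∀ x₁ x₂ x₃ : ℝ, p₄ x₁ x₂ x₃ = p₁ x₁ x₂ x₃ + p₃ x₁ x₂ x₃ - p₂ x₁ x₂ x₃)
    (Γ' : Set (ℝ × ℝ × ℝ))
    (hΓ' : Γ' = {v : ℝ × ℝ × ℝ | p₄ v.1 v.2.1 v.2.2 ∈ L₄ ∧
      (p₁ v.1 v.2.1 v.2.2 - p₂ v.1 v.2.1 v.2.2).1
        * (p₃ v.1 v.2.1 v.2.2 - p₂ v.1 v.2.1 v.2.2).1
      + (p₁ v.1 v.2.1 v.2.2 - p₂ v.1 v.2.1 v.2.2).2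
        * (p₃ v.1 v.2.1 v.2.2 - p₂ v.1 v.2.1 v.2.2).2 = 0})
    (ℓ : ℝ × ℝ × ℝ → ℝ)
    (hℓ : ℓ = fun v => (a₁ - a₄) * v.1 - (a₂ - a₄) * v.2.1 + (a₃ - a₄) * v.2.2
      + (b₁ - b₂ + b₃ - b₄)) :
    (∃ q : MvPolynomial (Fin 3) ℝ, q.totalDegree ≤ 2 ∧
      Γ' = {v : ℝ × ℝ × ℝ | ℓ v = 0} ∩
        {v : ℝ × ℝ × ℝ | MvPolynomial.eval ![v.1, v.2.1, v.2.2] q = 0}) ∧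
    (¬ (a₁ = a₂ ∧ a₂ = a₃ ∧ a₃ = a₄) → ∃ v w : ℝ × ℝ × ℝ, ℓ v ≠ ℓ w) := by
  constructor
  · refine ⟨(MvPolynomial.C 1 * MvPolynomial.X 0 + MvPolynomial.C (-1) * MvPolynomial.X 1
        + MvPolynomial.C 0)
      * (MvPolynomial.C 0 * MvPolynomial.X 0 + MvPolynomial.C (-1) * MvPolynomial.X 1
        + MvPolynomial.C 1 * MvPolynomial.X 2 + MvPolynomial.C 0)
      + (MvPolynomial.C a₁ * MvPolynomial.X 0 + MvPolynomial.C (-a₂) * MvPolynomial.X 1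
        + MvPolynomial.C (b₁ - b₂))
      * (MvPolynomial.C 0 * MvPolynomial.X 0 + MvPolynomial.C (-a₂) * MvPolynomial.X 1
        + MvPolynomial.C a₃ * MvPolynomial.X 2 + MvPolynomial.C (b₃ - b₂)), ?_, ?_⟩
    · apply le_trans (MvPolynomial.totalDegree_add _ _)
      simp only [max_le_iff]
      constructor
      · apply le_trans (MvPolynomial.totalDegree_mul _ _)
        have h1 := aux_deg1 1 (-1) 0
        have h2 : ((MvPolynomial.C 0 * MvPolynomial.X 0 + MvPolynomial.C (-1) * MvPolynomial.X 1
            + MvPolynomial.C 1 * MvPolynomial.X 2 + MvPolynomial.C 0 :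
            MvPolynomial (Fin 3) ℝ)).totalDegree ≤ 1 := by
          apply le_trans (MvPolynomial.totalDegree_add _ _)
          simp only [max_le_iff]
          refine ⟨le_trans (MvPolynomial.totalDegree_add _ _) ?_, by rw [MvPolynomial.totalDegree_C]; omega⟩
          simp only [max_le_iff]
          refine ⟨le_trans (MvPolynomial.totalDegree_add _ _) ?_,
            le_trans (MvPolynomial.totalDegree_mul _ _) (by simp [MvPolynomial.totalDegree_X])⟩
          simp only [max_le_iff]
          exact ⟨le_trans (MvPolynomial.totalDegree_mul _ _)
              (by simp [MvPolynomial.totalDegree_X]),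
            le_trans (MvPolynomial.totalDegree_mul _ _) (by simp [MvPolynomial.totalDegree_X])⟩
        omega
      · apply le_trans (MvPolynomial.totalDegree_mul _ _)
        have h1 := aux_deg1 a₁ (-a₂) (b₁ - b₂)
        have h2 : ((MvPolynomial.C 0 * MvPolynomial.X 0 + MvPolynomial.C (-a₂) * MvPolynomial.X 1
            + MvPolynomial.C a₃ * MvPolynomial.X 2 + MvPolynomial.C (b₃ - b₂) :
            MvPolynomial (Fin 3) ℝ)).totalDegree ≤ 1 := by
          apply le_trans (MvPolynomial.totalDegree_add _ _)
          simp only [max_le_iff]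
          refine ⟨le_trans (MvPolynomial.totalDegree_add _ _) ?_, by rw [MvPolynomial.totalDegree_C]; omega⟩
          simp only [max_le_iff]
          refine ⟨le_trans (MvPolynomial.totalDegree_add _ _) ?_,
            le_trans (MvPolynomial.totalDegree_mul _ _) (by simp [MvPolynomial.totalDegree_X])⟩
          simp only [max_le_iff]
          exact ⟨le_trans (MvPolynomial.totalDegree_mul _ _)
              (by simp [MvPolynomial.totalDegree_X]),
            le_trans (MvPolynomial.totalDegree_mul _ _) (by simp [MvPolynomial.totalDegree_X])⟩
        omega
    · ext v
      obtain ⟨x₁, x₂, x₃⟩ := v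
      simp only [hΓ', hL₄, hℓ, hp₄, hp₁, hp₂, hp₃, Set.mem_setOf_eq, Set.mem_inter_iff,
        Prod.mk_add_mk, Prod.mk_sub_mk, Prod.mk.injEq, map_add, map_mul, map_neg, map_sub,
        MvPolynomial.eval_C, MvPolynomial.eval_X, Matrix.cons_val_zero, Matrix.cons_val_one,
        Matrix.head_cons, Matrix.cons_val_two, Matrix.tail_cons]
      constructor
      · rintro ⟨⟨x, hx1, hx2⟩, hq⟩
        constructor
        · subst hx1; linarith [hx2]
        · ring_nf; ring_nf at hq; linarith [hq]
      · rintro ⟨hl, hq⟩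
        refine ⟨⟨x₁ + x₃ - x₂, rfl, by linarith [hl]⟩, ?_⟩
        ring_nf; ring_nf at hq; linarith [hq]
  · rintro hne
    subst hℓ
    by_cases h1 : a₁ = a₄
    · by_cases h2 : a₂ = a₄
      · have h3 : a₃ ≠ a₄ := fun h3 => hne ⟨h1.trans h2.symm, h2.trans h3.symm, h3⟩
        exact ⟨(0, 0, 1), (0, 0, 0), by simp; intro h; exact h3 (by linarith)⟩
      · exact ⟨(0, 1, 0), (0, 0, 0), by simp; intro h; exact h2 (by linarith)⟩
    · exact ⟨(1, 0, 0), (0, 0, 0), by simp; intro h; exact h1 (by linarith)⟩
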